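/- arXiv:1409.2652 — 2 statements merged into one kernel-verified Lean document; each statement's English description precedes it below -/
import Mathlib

section
/- Let M be an N-function with complementary function M*. Suppose Φ_i : Q → S³ and Ψ_i : Q → S³ are sequences with uniformly bounded modulars sup_i ∫_Q M(x,Φ_i) dx dt < ∞ and sup_i ∫_Q M*(x,Ψ_i) dx dt < ∞, Φ_i → Φ modularly in L_M(Q), and Ψ_i → Ψ modularly in L_{M*}(Q). Then Φ_i:Ψ_i → Φ:Ψ strongly in L¹(Q). -/
open MeasureTheory Filter Set Topology

noncomputable section

/-- `ℝ³`, the ambient space of the material body `Ω`. -/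
abbrev E3 := EuclideanSpace ℝ (Fin 3)

/-- `3 × 3` real matrices. -/
abbrev Mat3 := Matrix (Fin 3) (Fin 3) ℝ

instance : MeasurableSpace Mat3 := inferInstanceAs (MeasurableSpace (Fin 3 → Fin 3 → ℝ))

/-- The Frobenius inner product `ξ : η` on matrices. -/
def mdot (ξ η : Mat3) : ℝ := ∑ i, ∑ j, ξ i j * η i j

/-- The Frobenius norm `|ξ|` of a matrix. -/
def mnorm (ξ : Mat3) : ℝ := Real.sqrt (mdot ξ ξ)

/-- `S³`: the set of symmetric `3 × 3` real matrices. -/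
def Sym3 : Set Mat3 := {A | A.IsSymm}

/-- `S³_d`: the set of symmetric traceless `3 × 3` real matrices. -/
def Sym3d : Set Mat3 := {A | A.IsSymm ∧ A.trace = 0}

/-- `M : Ω × S³ → [0,∞)` is an `N`-function: Carathéodory (measurable in `x`,
continuous in `ξ`), vanishing exactly at `0`, even, convex in `ξ`, with
`M(x,ξ)/|ξ| → 0` as `|ξ| → 0` and `M(x,ξ)/|ξ| → ∞` as `|ξ| → ∞`. -/
structure IsNFunction (Ω : Set E3) (M : E3 → Mat3 → ℝ) : Prop where
  nonneg : ∀ x ξ, 0 ≤ M x ξ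
  meas : ∀ ξ, Measurable fun x => M x ξ
  cont : ∀ x, ContinuousOn (M x) Sym3
  zero_iff : ∀ x ∈ Ω, ∀ ξ ∈ Sym3, (M x ξ = 0 ↔ ξ = 0)
  even : ∀ x ∈ Ω, ∀ ξ ∈ Sym3, M x (-ξ) = M x ξ
  convexOn : ∀ x, ConvexOn ℝ Sym3 (M x)
  tendsto_zero : ∀ x ∈ Ω,
    Tendsto (fun ξ => M x ξ / mnorm ξ) (nhdsWithin 0 (Sym3 \ {0})) (nhds 0)
  tendsto_top : ∀ x ∈ Ω,
    Tendsto (fun ξ => M x ξ / mnorm ξ) ((comap mnorm atTop) ⊓ Filter.principal Sym3) atTop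

/-- The complementary function `M*(x,η) = sup_{ξ ∈ S³} (ξ:η − M(x,ξ))`. -/
def complFn (M : E3 → Mat3 → ℝ) (x : E3) (η : Mat3) : ℝ :=
  ⨆ ξ : Sym3, (mdot ξ.1 η - M x ξ.1)

/-- `ξᵢ → ξ` modularly in `L_M(Q)`, `Q = Ω × (0,T)`: there is `λ > 0` with
`∫_Q M(x, (ξᵢ−ξ)/λ) dx dt → 0`. -/
def ModularConv (Ω : Set E3) (T : ℝ) (M : E3 → Mat3 → ℝ)
    (ξi : ℕ → E3 × ℝ → Mat3) (ξ : E3 × ℝ → Mat3) : Prop :=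
  ∃ l : ℝ, 0 < l ∧
    Tendsto (fun i => ∫⁻ q in Ω ×ˢ Ioo (0:ℝ) T,
      ENNReal.ofReal (M q.1 (l⁻¹ • (ξi i q - ξ q)))) atTop (nhds 0)

section AuxLemmas

-- algebra
lemma mdot_comm (a b : Mat3) : mdot a b = mdot b a := by
  unfold mdot; congr 1; ext i; congr 1; ext j; ring

lemma mdot_add_left (a b c : Mat3) : mdot (a + b) c = mdot a c + mdot b c := by
  unfold mdot; rw [← Finset.sum_add_distrib]; congr 1; ext i
  rw [← Finset.sum_add_distrib]; congr 1; ext j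
  simp [Matrix.add_apply]; ring

lemma mdot_smul_left (c : ℝ) (a b : Mat3) : mdot (c • a) b = c * mdot a b := by
  unfold mdot; rw [Finset.mul_sum]; congr 1; ext i
  rw [Finset.mul_sum]; congr 1; ext j
  simp [Matrix.smul_apply, smul_eq_mul]; ring

lemma mdot_smul_right (c : ℝ) (a b : Mat3) : mdot a (c • b) = c * mdot a b := by
  rw [mdot_comm, mdot_smul_left, mdot_comm]

lemma mdot_add_right (a b c : Mat3) : mdot a (b + c) = mdot a b + mdot a c := by
  rw [mdot_comm, mdot_add_left, mdot_comm b a, mdot_comm c a]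

lemma mdot_neg_left (a b : Mat3) : mdot (-a) b = - mdot a b := by
  have : (-a) = (-1 : ℝ) • a := by simp
  rw [this, mdot_smul_left]; ring

lemma mdot_self_nonneg (a : Mat3) : 0 ≤ mdot a a :=
  Finset.sum_nonneg fun i _ => Finset.sum_nonneg fun j _ => mul_self_nonneg _

lemma mnorm_nonneg (a : Mat3) : 0 ≤ mnorm a := Real.sqrt_nonneg _

lemma mnorm_zero : mnorm 0 = 0 := by simp [mnorm, mdot]

lemma mnorm_sq (a : Mat3) : mnorm a ^ 2 = mdot a a := Real.sq_sqrt (mdot_self_nonneg a)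

lemma mdot_self_pos {a : Mat3} (ha : a ≠ 0) : 0 < mdot a a := by
  rcases (mdot_self_nonneg a).lt_or_eq with h | h
  · exact h
  · exfalso; apply ha
    have hz : ∀ i j, a i j = 0 := by
      intro i j
      have h1 : ∀ i ∈ Finset.univ, (0:ℝ) ≤ ∑ j, a i j * a i j :=
        fun i _ => Finset.sum_nonneg fun j _ => mul_self_nonneg _
      have h2 := (Finset.sum_eq_zero_iff_of_nonneg h1).mp h.symm i (Finset.mem_univ i)
      have h3 := (Finset.sum_eq_zero_iff_of_nonneg
        (fun j _ => mul_self_nonneg (a i j))).mp h2 j (Finset.mem_univ j)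
      nlinarith [mul_self_nonneg (a i j)]
    ext i j; exact hz i j

lemma mnorm_pos {a : Mat3} (ha : a ≠ 0) : 0 < mnorm a :=
  Real.sqrt_pos.mpr (mdot_self_pos ha)

lemma mnorm_smul (c : ℝ) (a : Mat3) : mnorm (c • a) = |c| * mnorm a := by
  unfold mnorm
  rw [mdot_smul_left, mdot_smul_right, ← mul_assoc]
  rw [show c * c * mdot a a = |c|^2 * mdot a a by rw [sq_abs]; ring]
  rw [Real.sqrt_mul (sq_nonneg _), Real.sqrt_sq_eq_abs, abs_abs]

lemma mdot_abs_le (a b : Mat3) : |mdot a b| ≤ mnorm a * mnorm b := by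
  have key : (mdot a b)^2 ≤ mdot a a * mdot b b := by
    have h := Finset.sum_mul_sq_le_sq_mul_sq Finset.univ
      (fun p : Fin 3 × Fin 3 => a p.1 p.2) (fun p : Fin 3 × Fin 3 => b p.1 p.2)
    have e1 : mdot a b = ∑ p : Fin 3 × Fin 3, a p.1 p.2 * b p.1 p.2 := by
      rw [Fintype.sum_prod_type]; rfl
    have e2 : mdot a a = ∑ p : Fin 3 × Fin 3, a p.1 p.2 ^ 2 := by
      rw [Fintype.sum_prod_type]; unfold mdot
      exact Finset.sum_congr rfl fun i _ => Finset.sum_congr rfl fun j _ => by ring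
    have e3 : mdot b b = ∑ p : Fin 3 × Fin 3, b p.1 p.2 ^ 2 := by
      rw [Fintype.sum_prod_type]; unfold mdot
      exact Finset.sum_congr rfl fun i _ => Finset.sum_congr rfl fun j _ => by ring
    rw [e1, e2, e3]; exact h
  calc |mdot a b| = Real.sqrt ((mdot a b)^2) := (Real.sqrt_sq_eq_abs _).symm
    _ ≤ Real.sqrt (mdot a a * mdot b b) := Real.sqrt_le_sqrt key
    _ = mnorm a * mnorm b := Real.sqrt_mul (mdot_self_nonneg a) _

lemma entry_abs_le_mnorm (a : Mat3) (i j : Fin 3) : |a i j| ≤ mnorm a := by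
  have h : (a i j)^2 ≤ mdot a a := by
    unfold mdot
    have h1 : (a i j)^2 ≤ ∑ j', a i j' * a i j' := by
      have h0 : a i j * a i j ≤ ∑ j', a i j' * a i j' := by
        simpa using Finset.single_le_sum (f := fun j' => a i j' * a i j')
          (fun j' _ => mul_self_nonneg _) (Finset.mem_univ j)
      nlinarith
    have h2 : ∑ j', a i j' * a i j' ≤ ∑ i', ∑ j', a i' j' * a i' j' :=
      Finset.single_le_sum (f := fun i' => ∑ j', a i' j' * a i' j')
        (fun i' _ => Finset.sum_nonneg fun j' _ => mul_self_nonneg _) (Finset.mem_univ i)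
    linarith
  calc |a i j| = Real.sqrt ((a i j)^2) := (Real.sqrt_sq_eq_abs _).symm
    _ ≤ mnorm a := Real.sqrt_le_sqrt h

lemma mnorm_le_of_entries {a : Mat3} {c : ℝ} (hc : 0 ≤ c) (h : ∀ i j, |a i j| ≤ c) :
    mnorm a ≤ 3 * c := by
  have h1 : mdot a a ≤ (3*c)^2 := by
    unfold mdot
    have : ∀ i j : Fin 3, a i j * a i j ≤ c^2 := by
      intro i j; nlinarith [h i j, abs_nonneg (a i j), sq_abs (a i j), (h i j)]
    calc ∑ i, ∑ j, a i j * a i j ≤ ∑ i : Fin 3, ∑ j : Fin 3, c^2 :=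
        Finset.sum_le_sum fun i _ => Finset.sum_le_sum fun j _ => this i j
      _ = 9 * c^2 := by simp; ring
      _ ≤ (3*c)^2 := by nlinarith
  calc mnorm a ≤ Real.sqrt ((3*c)^2) := Real.sqrt_le_sqrt h1
    _ = 3*c := Real.sqrt_sq (by linarith)

-- continuity
lemma continuous_mdot : Continuous (fun p : Mat3 × Mat3 => mdot p.1 p.2) := by
  unfold mdot
  apply continuous_finset_sum; intro i _
  apply continuous_finset_sum; intro j _
  exact ((continuous_apply j).comp ((continuous_apply i).comp continuous_fst)).mul
    ((continuous_apply_apply i j).comp continuous_snd)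

lemma continuous_mdot_right (η : Mat3) : Continuous (fun a : Mat3 => mdot a η) :=
  continuous_mdot.comp (Continuous.prodMk_left η : Continuous fun a : Mat3 => (a, η))

lemma continuous_mnorm : Continuous mnorm :=
  Real.continuous_sqrt.comp (continuous_mdot.comp (continuous_id.prodMk continuous_id))

-- Sym3
lemma sym3_zero : (0 : Mat3) ∈ Sym3 := by simp [Sym3, Matrix.IsSymm]

lemma sym3_neg {a : Mat3} (ha : a ∈ Sym3) : -a ∈ Sym3 := by
  simp only [Sym3, Matrix.IsSymm, Set.mem_setOf_eq] at *
  rw [Matrix.transpose_neg, ha]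

lemma sym3_smul {a : Mat3} (c : ℝ) (ha : a ∈ Sym3) : c • a ∈ Sym3 := by
  simp only [Sym3, Matrix.IsSymm, Set.mem_setOf_eq] at *
  rw [Matrix.transpose_smul, ha]

lemma sym3_add {a b : Mat3} (ha : a ∈ Sym3) (hb : b ∈ Sym3) : a + b ∈ Sym3 := by
  simp only [Sym3, Matrix.IsSymm, Set.mem_setOf_eq] at *
  rw [Matrix.transpose_add, ha, hb]

lemma sym3_sub {a b : Mat3} (ha : a ∈ Sym3) (hb : b ∈ Sym3) : a - b ∈ Sym3 := by
  simp only [Sym3, Matrix.IsSymm, Set.mem_setOf_eq] at *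
  rw [Matrix.transpose_sub, ha, hb]

lemma isClosed_sym3 : IsClosed Sym3 := by
  have : Sym3 = {A : Mat3 | A.transpose = A} := rfl
  rw [this]
  apply isClosed_eq _ continuous_id
  -- continuity of transpose
  apply continuous_pi; intro i; apply continuous_pi; intro j
  exact (continuous_apply i).comp (continuous_apply j)


lemma mdot_zero_left (b : Mat3) : mdot 0 b = 0 := by simp [mdot]

instance : Nonempty (↥Sym3) := ⟨⟨0, sym3_zero⟩⟩

section NFn
variable {Ω : Set E3} {M : E3 → Mat3 → ℝ} (hM : IsNFunction Ω M) {x : E3} (hx : x ∈ Ω)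
include hM hx

lemma M_zero : M x 0 = 0 := (hM.zero_iff x hx 0 sym3_zero).mpr rfl

/-- coercivity extraction -/
lemma exists_coercive_bound (c : ℝ) :
    ∃ R : ℝ, ∀ ξ ∈ Sym3, R ≤ mnorm ξ → c ≤ M x ξ / mnorm ξ := by
  have h := (hM.tendsto_top x hx).eventually (eventually_ge_atTop c)
  rw [eventually_inf_principal] at h
  rw [eventually_comap] at h
  rw [eventually_atTop] at h
  obtain ⟨R, hR⟩ := h
  exact ⟨R, fun ξ hξs hξR => hR (mnorm ξ) hξR ξ rfl hξs⟩

lemma bddAbove_cterm (η : Mat3) :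
    BddAbove (Set.range fun ξ : Sym3 => mdot ξ.1 η - M x ξ.1) := by
  obtain ⟨R, hR⟩ := exists_coercive_bound hM hx (mnorm η + 1)
  set R' := max R 1 with hR'
  refine ⟨max (R' * mnorm η) 0, ?_⟩
  rintro t ⟨ξ, rfl⟩
  rcases le_or_gt (mnorm ξ.1) R' with hle | hgt
  · have h1 : mdot ξ.1 η - M x ξ.1 ≤ mnorm ξ.1 * mnorm η := by
      have := (abs_le.mp (mdot_abs_le ξ.1 η)).2
      have := hM.nonneg x ξ.1
      linarith
    have h2 : mnorm ξ.1 * mnorm η ≤ R' * mnorm η :=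
      mul_le_mul_of_nonneg_right hle (mnorm_nonneg η)
    exact le_max_iff.mpr (Or.inl (h1.trans h2))
  · have hRle : R ≤ mnorm ξ.1 := le_trans (le_max_left _ _) hgt.le
    have hpos : 0 < mnorm ξ.1 := lt_of_lt_of_le (lt_of_lt_of_le one_pos (le_max_right R 1)) hgt.le
    have h1 := hR ξ.1 ξ.2 hRle
    have h2 : (mnorm η + 1) * mnorm ξ.1 ≤ M x ξ.1 := by
      rw [← le_div_iff₀ hpos] at *; linarith
    have h3 : mdot ξ.1 η ≤ mnorm ξ.1 * mnorm η := by
      have := (abs_le.mp (mdot_abs_le ξ.1 η)).2; linarith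
    have : mdot ξ.1 η - M x ξ.1 ≤ 0 := by nlinarith
    exact le_max_iff.mpr (Or.inr this)

lemma le_complFn {ξ : Mat3} (hξ : ξ ∈ Sym3) (η : Mat3) :
    mdot ξ η - M x ξ ≤ complFn M x η :=
  le_ciSup (bddAbove_cterm hM hx η) (⟨ξ, hξ⟩ : Sym3)

lemma complFn_nonneg (η : Mat3) : 0 ≤ complFn M x η := by
  have := le_complFn hM hx sym3_zero η
  rwa [mdot_zero_left, M_zero hM hx, sub_zero] at this

lemma fenchel_young {ξ : Mat3} (hξ : ξ ∈ Sym3) (η : Mat3) :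
    |mdot ξ η| ≤ M x ξ + complFn M x η := by
  rw [abs_le]
  constructor
  · have h := le_complFn hM hx (sym3_neg hξ) η
    rw [mdot_neg_left, hM.even x hx ξ hξ] at h
    linarith
  · have h := le_complFn hM hx hξ η
    linarith

lemma complFn_combo {a b : ℝ} (ha : 0 ≤ a) (hb : 0 ≤ b) (hab : a + b = 1) (η₁ η₂ : Mat3) :
    complFn M x (a • η₁ + b • η₂) ≤ a * complFn M x η₁ + b * complFn M x η₂ := by
  apply ciSup_le
  intro ξ
  have e : mdot ξ.1 (a • η₁ + b • η₂) - M x ξ.1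
      = a * (mdot ξ.1 η₁ - M x ξ.1) + b * (mdot ξ.1 η₂ - M x ξ.1) := by
    rw [mdot_add_right, mdot_smul_right, mdot_smul_right]
    have : a * M x ξ.1 + b * M x ξ.1 = M x ξ.1 := by
      rw [← add_mul, hab, one_mul]
    linarith
  rw [e]
  exact add_le_add (mul_le_mul_of_nonneg_left (le_complFn hM hx ξ.2 η₁) ha)
    (mul_le_mul_of_nonneg_left (le_complFn hM hx ξ.2 η₂) hb)

lemma complFn_neg_le (η : Mat3) : complFn M x (-η) ≤ complFn M x η := by
  apply ciSup_le
  intro ξ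
  have e : mdot ξ.1 (-η) - M x ξ.1 = mdot (-ξ.1) η - M x (-ξ.1) := by
    rw [mdot_neg_left, hM.even x hx ξ.1 ξ.2]
    have : mdot ξ.1 (-η) = - mdot ξ.1 η := by
      rw [mdot_comm, mdot_neg_left, mdot_comm]
    rw [this]
  rw [e]
  exact le_complFn hM hx (sym3_neg ξ.2) η

lemma complFn_neg (η : Mat3) : complFn M x (-η) = complFn M x η := by
  refine le_antisymm (complFn_neg_le hM hx η) ?_
  have := complFn_neg_le hM hx (-η)
  rwa [neg_neg] at this

lemma complFn_pos {η : Mat3} (hη : η ∈ Sym3) (hne : η ≠ 0) : 0 < complFn M x η := by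
  have hd : 0 < mdot η η := mdot_self_pos hne
  have hn : 0 < mnorm η := mnorm_pos hne
  set c := mdot η η / (2 * mnorm η) with hc
  have hcpos : 0 < c := div_pos hd (by linarith)
  -- the curve t ↦ t • η tends to 0 within Sym3 \ {0} as t → 0⁺
  have htend : Tendsto (fun t : ℝ => t • η) (nhdsWithin 0 (Ioi 0)) (nhdsWithin 0 (Sym3 \ {0})) := by
    apply tendsto_nhdsWithin_of_tendsto_nhds_of_eventually_within
    · have : Tendsto (fun t : ℝ => t • η) (nhds 0) (nhds ((0:ℝ) • η)) :=
        (continuous_id.smul continuous_const).tendsto 0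
      rw [zero_smul] at this
      exact this.mono_left nhdsWithin_le_nhds
    · filter_upwards [self_mem_nhdsWithin] with t (ht : t ∈ Ioi 0)
      have htne : (t:ℝ) ≠ 0 := ne_of_gt ht
      have hne' : t • η ≠ 0 := by
        intro h
        apply hne
        have h2 := congrArg (fun A : Mat3 => t⁻¹ • A) h
        simpa [smul_smul, inv_mul_cancel₀ htne] using h2
      exact ⟨sym3_smul t hη, by simpa using hne'⟩
  have hev : ∀ᶠ t in nhdsWithin (0:ℝ) (Ioi 0),
      M x (t • η) / mnorm (t • η) < c :=
    ((hM.tendsto_zero x hx).comp htend).eventually (Iio_mem_nhds hcpos)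
  obtain ⟨t, htlt, htpos⟩ := (hev.and self_mem_nhdsWithin).exists
  have htpos' : (0:ℝ) < t := htpos
  have hmn : mnorm (t • η) = t * mnorm η := by
    rw [mnorm_smul, abs_of_pos htpos']
  have hmnpos : 0 < mnorm (t • η) := by rw [hmn]; positivity
  have hMlt : M x (t • η) < c * (t * mnorm η) := by
    have := (div_lt_iff₀ hmnpos).mp htlt
    rwa [hmn] at this
  have hkey : t * mdot η η - M x (t • η) ≤ complFn M x η := by
    have := le_complFn hM hx (sym3_smul t hη) η
    rwa [mdot_smul_left] at this
  have : c * (t * mnorm η) = t * mdot η η / 2 := by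
    rw [hc]; field_simp
  nlinarith

end NFn

instance : FirstCountableTopology Mat3 :=
  inferInstanceAs (FirstCountableTopology (Fin 3 → Fin 3 → ℝ))
instance : SecondCountableTopology Mat3 :=
  inferInstanceAs (SecondCountableTopology (Fin 3 → Fin 3 → ℝ))

lemma tendsto_of_mnorm_tendsto {ζ : ℕ → Mat3}
    (h : Tendsto (fun k => mnorm (ζ k)) atTop (nhds 0)) : Tendsto ζ atTop (nhds 0) := by
  refine tendsto_pi_nhds.mpr ?_
  intro i
  rw [show ((0:Mat3) i) = fun _ : Fin 3 => (0:ℝ) by ext j; rfl, tendsto_pi_nhds]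
  intro j
  exact squeeze_zero_norm (fun k => entry_abs_le_mnorm (ζ k) i j) h

lemma isCompact_box (R : ℝ) : IsCompact {A : Mat3 | ∀ i j, |A i j| ≤ R} := by
  have e : {A : Mat3 | ∀ i j, |A i j| ≤ R} =
      Set.univ.pi (fun _ : Fin 3 => Set.univ.pi fun _ : Fin 3 => Icc (-R) R) := by
    ext A
    constructor
    · intro hA
      refine Set.mem_univ_pi.mpr fun i => Set.mem_univ_pi.mpr fun j => ?_
      exact Set.mem_Icc.mpr (abs_le.mp (hA i j))
    · intro hA i j
      exact abs_le.mpr (Set.mem_Icc.mp (Set.mem_univ_pi.mp (Set.mem_univ_pi.mp hA i) j))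
  rw [e]
  exact isCompact_univ_pi fun _ => isCompact_univ_pi fun _ => isCompact_Icc

section NFn2
variable {Ω : Set E3} {M : E3 → Mat3 → ℝ} (hM : IsNFunction Ω M) {x : E3} (hx : x ∈ Ω)
include hM hx

lemma tendsto_zero_of_M_tendsto {ζ : ℕ → Mat3} (hs : ∀ k, ζ k ∈ Sym3)
    (h : Tendsto (fun k => M x (ζ k)) atTop (nhds 0)) : Tendsto ζ atTop (nhds 0) := by
  obtain ⟨R, hR⟩ := exists_coercive_bound hM hx 1
  set R' := max R 1 with hR'
  have hbdd : ∀ᶠ k in atTop, mnorm (ζ k) ≤ R' := by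
    filter_upwards [h.eventually (Iio_mem_nhds one_pos)] with k hk
    by_contra hgt
    push_neg at hgt
    have h1 : R ≤ mnorm (ζ k) := le_trans (le_max_left _ _) hgt.le
    have hpos : 0 < mnorm (ζ k) :=
      lt_of_lt_of_le (lt_of_lt_of_le one_pos (le_max_right R 1)) hgt.le
    have h2 := (le_div_iff₀ hpos).mp (hR (ζ k) (hs k) h1)
    have h3 : (1:ℝ) ≤ mnorm (ζ k) := le_trans (le_max_right R 1) hgt.le
    rw [one_mul] at h2
    linarith
  apply tendsto_of_mnorm_tendsto
  by_contra hcon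
  rw [Metric.tendsto_atTop] at hcon
  push_neg at hcon
  obtain ⟨ε, hε, hfreq⟩ := hcon
  have hfreq' : ∃ᶠ k in atTop, ε ≤ mnorm (ζ k) ∧ mnorm (ζ k) ≤ R' := by
    apply Frequently.and_eventually _ hbdd
    rw [frequently_atTop]
    intro N
    obtain ⟨n, hnN, hn⟩ := hfreq N
    refine ⟨n, hnN, ?_⟩
    rw [Real.dist_eq, sub_zero, abs_of_nonneg (mnorm_nonneg _)] at hn
    exact hn
  obtain ⟨φ, hφ, hφprop⟩ := Filter.extraction_of_frequently_atTop hfreq'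
  set K : Set Mat3 := Sym3 ∩ mnorm ⁻¹' (Icc ε R') with hK
  have hKc : IsCompact K := by
    apply IsCompact.of_isClosed_subset (isCompact_box R')
    · exact isClosed_sym3.inter (IsClosed.preimage continuous_mnorm isClosed_Icc)
    · rintro A ⟨_, hA2⟩ i j
      exact le_trans (entry_abs_le_mnorm A i j) hA2.2
  have hmem : ∀ n, ζ (φ n) ∈ K := fun n => ⟨hs _, ⟨(hφprop n).1, (hφprop n).2⟩⟩
  obtain ⟨A, hAK, ψ, hψ, htend⟩ := hKc.tendsto_subseq hmem
  have hMA : Tendsto (fun n => M x (ζ (φ (ψ n)))) atTop (nhds (M x A)) := by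
    have hw : Tendsto (fun n => ζ (φ (ψ n))) atTop (nhdsWithin A Sym3) :=
      tendsto_nhdsWithin_of_tendsto_nhds_of_eventually_within _ htend
        (Eventually.of_forall fun n => hs _)
    exact ((hM.cont x) A hAK.1).tendsto.comp hw
  have hM0 : Tendsto (fun n => M x (ζ (φ (ψ n)))) atTop (nhds 0) :=
    h.comp ((hφ.comp hψ).tendsto_atTop)
  have hA0 : M x A = 0 := tendsto_nhds_unique hMA hM0
  have hAz : A = 0 := (hM.zero_iff x hx A hAK.1).mp hA0
  have hmA : mnorm A = 0 := by rw [hAz, mnorm_zero]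
  have hεA : ε ≤ mnorm A := hAK.2.1
  linarith

/-- test matrices -/
def sbm (a b : Fin 3) : Mat3 :=
  Matrix.of fun i j => (if i = a ∧ j = b then (1:ℝ) else 0) + (if i = b ∧ j = a then 1 else 0)

omit hM hx in
lemma sbm_sym (a b : Fin 3) : sbm a b ∈ Sym3 := by
  show (sbm a b).transpose = sbm a b
  ext i j
  simp only [sbm, Matrix.transpose_apply, Matrix.of_apply]
  rw [add_comm]
  congr 1 <;>
  · refine if_congr ?_ rfl rfl
    constructor <;> (rintro ⟨h1, h2⟩; exact ⟨h2, h1⟩)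

omit hM hx in
lemma mdot_sbm (a b : Fin 3) (η : Mat3) : mdot (sbm a b) η = η a b + η b a := by
  unfold mdot sbm
  fin_cases a <;> fin_cases b <;>
    simp [Fin.sum_univ_three, Matrix.of_apply] <;> ring

lemma tendsto_zero_of_complFn_tendsto {η : ℕ → Mat3} (hs : ∀ k, η k ∈ Sym3)
    (h : Tendsto (fun k => complFn M x (η k)) atTop (nhds 0)) : Tendsto η atTop (nhds 0) := by
  -- entry bounds
  set S : ℝ := ∑ a, ∑ b, M x (sbm a b) with hS
  have hSab : ∀ a b, M x (sbm a b) ≤ S := by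
    intro a b
    have h1 : M x (sbm a b) ≤ ∑ b', M x (sbm a b') :=
      Finset.single_le_sum (f := fun b' => M x (sbm a b'))
        (fun _ _ => hM.nonneg x _) (Finset.mem_univ b)
    have h2 : ∑ b', M x (sbm a b') ≤ S :=
      Finset.single_le_sum (f := fun a' => ∑ b', M x (sbm a' b'))
        (fun _ _ => Finset.sum_nonneg fun _ _ => hM.nonneg x _) (Finset.mem_univ a)
    linarith
  have hSnn : 0 ≤ S := Finset.sum_nonneg fun _ _ => Finset.sum_nonneg fun _ _ => hM.nonneg x _
  have hent : ∀ k, complFn M x (η k) ≤ 1 → ∀ a b, |η k a b| ≤ (1 + S) / 2 := by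
    intro k hk a b
    have hfy := fenchel_young hM hx (sbm_sym a b) (η k)
    rw [mdot_sbm] at hfy
    have h2ab : η k a b + η k b a = 2 * η k a b := by
      have hsym : (η k).transpose = η k := hs k
      have h5 : η k a b = η k b a := by
        have h6 := congrFun (congrFun hsym b) a
        simpa [Matrix.transpose_apply] using h6
      linarith
    rw [h2ab, abs_mul, abs_two] at hfy
    have := hSab a b
    have := abs_nonneg (η k a b)
    linarith
  have hbdd : ∀ᶠ k in atTop, mnorm (η k) ≤ 3 * ((1 + S)/2) := by
    filter_upwards [h.eventually (Iio_mem_nhds one_pos)] with k hk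
    exact mnorm_le_of_entries (by linarith) (hent k hk.le)
  set R' := 3 * ((1 + S)/2) with hR'
  apply tendsto_of_mnorm_tendsto
  by_contra hcon
  rw [Metric.tendsto_atTop] at hcon
  push_neg at hcon
  obtain ⟨ε, hε, hfreq⟩ := hcon
  have hfreq' : ∃ᶠ k in atTop, ε ≤ mnorm (η k) ∧ mnorm (η k) ≤ R' := by
    apply Frequently.and_eventually _ hbdd
    rw [frequently_atTop]
    intro N
    obtain ⟨n, hnN, hn⟩ := hfreq N
    refine ⟨n, hnN, ?_⟩
    rw [Real.dist_eq, sub_zero, abs_of_nonneg (mnorm_nonneg _)] at hn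
    exact hn
  obtain ⟨φ, hφ, hφprop⟩ := Filter.extraction_of_frequently_atTop hfreq'
  set K : Set Mat3 := Sym3 ∩ mnorm ⁻¹' (Icc ε R') with hK
  have hKc : IsCompact K := by
    apply IsCompact.of_isClosed_subset (isCompact_box R')
    · exact isClosed_sym3.inter (IsClosed.preimage continuous_mnorm isClosed_Icc)
    · rintro A ⟨_, hA2⟩ i j
      exact le_trans (entry_abs_le_mnorm A i j) hA2.2
  have hmem : ∀ n, η (φ n) ∈ K := fun n => ⟨hs _, ⟨(hφprop n).1, (hφprop n).2⟩⟩
  obtain ⟨A, hAK, ψ, hψ, htend⟩ := hKc.tendsto_subseq hmem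
  have hAne : A ≠ 0 := by
    intro hAz
    have hεA : ε ≤ mnorm A := hAK.2.1
    rw [hAz, mnorm_zero] at hεA
    linarith
  have hle : complFn M x A ≤ 0 := by
    apply ciSup_le
    intro ξ
    have hc2 : Continuous fun B : Mat3 => mdot ξ.1 B := by
      have e : (fun B : Mat3 => mdot ξ.1 B) = fun B : Mat3 => mdot B ξ.1 :=
        funext fun B => mdot_comm _ _
      rw [e]
      exact continuous_mdot_right ξ.1
    have t1 : Tendsto (fun n => mdot ξ.1 (η (φ (ψ n))) - M x ξ.1) atTop
        (nhds (mdot ξ.1 A - M x ξ.1)) :=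
      ((hc2.tendsto A).comp htend).sub_const (M x ξ.1)
    have t2 : Tendsto (fun n => complFn M x (η (φ (ψ n)))) atTop (nhds 0) :=
      h.comp ((hφ.comp hψ).tendsto_atTop)
    exact le_of_tendsto_of_tendsto' t1 t2 fun n => le_complFn hM hx ξ.2 _
  exact absurd (complFn_pos hM hx hAK.1 hAne) (not_lt.mpr hle)
end NFn2

instance : TopologicalSpace.MetrizableSpace Mat3 :=
  inferInstanceAs (TopologicalSpace.MetrizableSpace (Fin 3 → Fin 3 → ℝ))
instance : BorelSpace Mat3 := inferInstanceAs (BorelSpace (Fin 3 → Fin 3 → ℝ))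

lemma continuous_mdot_left (ξ : Mat3) : Continuous fun B : Mat3 => mdot ξ B := by
  have e : (fun B : Mat3 => mdot ξ B) = fun B : Mat3 => mdot B ξ :=
    funext fun B => mdot_comm _ _
  rw [e]
  exact continuous_mdot_right ξ

section Meas
variable {Ω : Set E3} {M : E3 → Mat3 → ℝ} (hM : IsNFunction Ω M)
  {α : Type*} [MeasurableSpace α]
include hM

lemma measurable_M_comp {g : α → E3} (hg : Measurable g) {f : α → Mat3}
    (hf : Measurable f) (hfs : ∀ q, f q ∈ Sym3) :
    Measurable fun q => M (g q) (f q) := by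
  have hu : Measurable (Function.uncurry fun (ξ : ↥Sym3) (x : E3) => M x ξ.1) := by
    apply measurable_uncurry_of_continuous_of_measurable
    · intro x
      exact continuousOn_iff_continuous_restrict.mp (hM.cont x)
    · intro ξ
      exact hM.meas ξ.1
  exact hu.comp (Measurable.prodMk (hf.subtype_mk (h := hfs)) hg)

lemma complFn_eq_iSup (d : ℕ → ↥Sym3) (hd : DenseRange d) (x : E3) (η : Mat3) :
    complFn M x η = ⨆ n, (mdot (d n).1 η - M x (d n).1) := by
  set F : ↥Sym3 → ℝ := fun ξ => mdot ξ.1 η - M x ξ.1 with hF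
  have hFc : Continuous F := by
    apply Continuous.sub
    · exact (continuous_mdot_right η).comp continuous_subtype_val
    · exact continuousOn_iff_continuous_restrict.mp (hM.cont x)
  have key : ∀ B : ℝ, (∀ n, F (d n) ≤ B) → ∀ ξ : ↥Sym3, F ξ ≤ B := by
    intro B hB ξ
    obtain ⟨u, hu1, hu2⟩ := mem_closure_iff_seq_limit.mp (hd ξ)
    have ht : Tendsto (fun j => F (u j)) atTop (nhds (F ξ)) := (hFc.tendsto ξ).comp hu2
    apply le_of_tendsto ht
    filter_upwards with j
    obtain ⟨n, hn⟩ := hu1 j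
    rw [← hn]
    exact hB n
  by_cases hb : BddAbove (Set.range F)
  · have hbd : BddAbove (Set.range fun n => F (d n)) := by
      obtain ⟨B, hB⟩ := hb
      exact ⟨B, by rintro s ⟨n, rfl⟩; exact hB ⟨d n, rfl⟩⟩
    refine le_antisymm (ciSup_le fun ξ => ?_) (ciSup_le fun n => le_ciSup hb (d n))
    exact key _ (fun n => le_ciSup hbd n) ξ
  · have hb2 : ¬ BddAbove (Set.range fun n => F (d n)) := by
      rintro ⟨B, hB⟩
      exact hb ⟨B, by rintro s ⟨ξ, rfl⟩; exact key B (fun n => hB ⟨n, rfl⟩) ξ⟩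
    have e : complFn M x η = ⨆ ξ, F ξ := rfl
    rw [e, Real.iSup_of_not_bddAbove hb, Real.iSup_of_not_bddAbove hb2]

/-- a.e. measurability of `q ↦ M*(g q, f q)` when `g q ∈ Ω` a.e. -/
lemma aemeasurable_complFn_comp {μ : Measure α}
    {g : α → E3} (hg : Measurable g) (hgΩ : ∀ᵐ q ∂μ, g q ∈ Ω)
    {f : α → Mat3} (hf : Measurable f) :
    AEMeasurable (fun q => complFn M (g q) (f q)) μ := by
  set d := TopologicalSpace.denseSeq ↥Sym3 with hdd
  have hd : DenseRange d := TopologicalSpace.denseRange_denseSeq ↥Sym3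
  set t : ℕ → α → ℝ := fun n q => mdot (d n).1 (f q) - M (g q) (d n).1 with ht
  have hts : ∀ n, Measurable (t n) := fun n =>
    (((continuous_mdot_left (d n).1).measurable).comp hf).sub
      ((hM.meas (d n).1).comp hg)
  set p : ℕ → α → ℝ :=
    fun N q => (Finset.range (N+1)).sup' Finset.nonempty_range_add_one (fun n => t n q) with hp
  have hps : ∀ N, Measurable (p N) := fun N =>
    Finset.measurable_range_sup'' fun k _ => hts k
  apply aemeasurable_of_tendsto_metrizable_ae' (f := p) (fun N => (hps N).aemeasurable)
  filter_upwards [hgΩ] with q hq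
  have hbdd : BddAbove (Set.range fun n => t n q) := by
    obtain ⟨B, hB⟩ := bddAbove_cterm hM hq (f q)
    exact ⟨B, by rintro s ⟨n, rfl⟩; exact hB ⟨d n, rfl⟩⟩
  obtain ⟨B, hB⟩ := hbdd
  have hB' : ∀ n, t n q ≤ B := fun n => hB ⟨n, rfl⟩
  have hmono : Monotone fun N => p N q := by
    intro N1 N2 hN
    apply Finset.sup'_le
    intro n hn
    exact Finset.le_sup' (fun n => t n q)
      (Finset.mem_range.mpr (lt_of_lt_of_le (Finset.mem_range.mp hn) (by omega)))
  have hbddp : BddAbove (Set.range fun N => p N q) := by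
    refine ⟨B, ?_⟩
    rintro s ⟨N, rfl⟩
    exact Finset.sup'_le _ _ fun n _ => hB' n
  have htend : Tendsto (fun N => p N q) atTop (nhds (⨆ N, p N q)) :=
    tendsto_atTop_ciSup hmono hbddp
  have heq : (⨆ N, p N q) = ⨆ n, t n q := by
    apply le_antisymm
    · exact ciSup_le fun N => Finset.sup'_le _ _ fun n _ => le_ciSup ⟨B, hB⟩ n
    · refine ciSup_le fun n => ?_
      exact le_trans (Finset.le_sup' (fun m => t m q) (Finset.self_mem_range_succ n))
        (le_ciSup hbddp n)
  rw [complFn_eq_iSup hM d hd (g q) (f q), ← heq]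
  exact htend
end Meas

lemma enn_le_add_min {a b c : ENNReal} (h : a ≤ b + c) : a ≤ b + min a c := by
  rcases le_total a c with h2 | h2
  · rw [min_eq_left h2]; exact le_add_self
  · rw [min_eq_right h2]; exact h

lemma tsum_half_pow_ne_top : (∑' k : ℕ, (2⁻¹ : ENNReal) ^ k) ≠ ⊤ := by
  rw [ENNReal.tsum_geometric]
  have h1 : (2⁻¹ : ENNReal) < 1 := by
    rw [ENNReal.inv_lt_one]
    exact ENNReal.one_lt_two
  have h2 : (1 : ENNReal) - 2⁻¹ ≠ 0 := by
    intro hc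
    exact absurd (tsub_eq_zero_iff_le.mp hc) (not_le.mpr h1)
  exact ENNReal.inv_ne_top.mpr h2

lemma half_pow_pos (k : ℕ) : (0 : ENNReal) < 2⁻¹ ^ k :=
  ENNReal.pow_pos (ENNReal.inv_pos.mpr ENNReal.ofNat_ne_top) k

lemma half_pow_tendsto : Tendsto (fun k : ℕ => (2⁻¹ : ENNReal) ^ k) atTop (nhds 0) :=
  ENNReal.tendsto_pow_atTop_nhds_zero_of_lt_one
    (by rw [ENNReal.inv_lt_one]; exact ENNReal.one_lt_two)

section MeasHelp
variable {α : Type*} [MeasurableSpace α]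

lemma measurable_entry {f : α → Mat3} (hf : Measurable f) (a b : Fin 3) :
    Measurable fun q => f q a b :=
  (measurable_pi_apply b).comp ((measurable_pi_apply a).comp hf)

lemma measurable_of_entries {f : α → Mat3} (h : ∀ a b, Measurable fun q => f q a b) :
    Measurable f :=
  measurable_pi_lambda _ fun a => measurable_pi_lambda _ fun b => h a b

lemma measurable_msmul (c : ℝ) {f : α → Mat3} (hf : Measurable f) :
    Measurable fun q => c • f q := by
  apply measurable_of_entries
  intro a b
  have e : (fun q => (c • f q) a b) = fun q => c * f q a b := by
    funext q; simp [Matrix.smul_apply, smul_eq_mul]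
  rw [e]
  exact (measurable_entry hf a b).const_mul c

lemma measurable_msub {f g : α → Mat3} (hf : Measurable f) (hg : Measurable g) :
    Measurable fun q => f q - g q := by
  apply measurable_of_entries
  intro a b
  have e : (fun q => (f q - g q) a b) = fun q => f q a b - g q a b := by
    funext q; simp [Matrix.sub_apply]
  rw [e]
  exact (measurable_entry hf a b).sub (measurable_entry hg a b)

lemma measurable_mdot_comp {f g : α → Mat3} (hf : Measurable f) (hg : Measurable g) :
    Measurable fun q => mdot (f q) (g q) :=
  continuous_mdot.measurable.comp (hf.prodMk hg)

end MeasHelp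

section Terms
variable {Ω : Set E3} {M : E3 → Mat3 → ℝ} (hM : IsNFunction Ω M)
  {ν : Measure (E3 × ℝ)} (hae : ∀ᵐ q ∂ν, q.1 ∈ Ω)
include hM hae

lemma term2_tendsto {ξ : ℕ → E3 × ℝ → Mat3} (hξm : ∀ i, Measurable (ξ i))
    (hξs : ∀ i q, ξ i q ∈ Sym3)
    {Ψ' : E3 × ℝ → Mat3} (hΨ'm : Measurable Ψ')
    (hfin : ∫⁻ q, ENNReal.ofReal (complFn M q.1 (Ψ' q)) ∂ν ≠ ⊤)
    (hA : Tendsto (fun i => ∫⁻ q, ENNReal.ofReal (M q.1 (ξ i q)) ∂ν) atTop (nhds 0)) :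
    Tendsto (fun i => ∫⁻ q, ENNReal.ofReal |mdot (ξ i q) (Ψ' q)| ∂ν) atTop (nhds 0) := by
  classical
  set g : ℕ → E3 × ℝ → ENNReal := fun i q => ENNReal.ofReal (M q.1 (ξ i q)) with hg
  have hgm : ∀ i, Measurable (g i) := fun i =>
    (measurable_M_comp hM measurable_fst (hξm i) (hξs i)).ennreal_ofReal
  set h : E3 × ℝ → ENNReal := fun q => ENNReal.ofReal (complFn M q.1 (Ψ' q)) with hh
  have hhm : AEMeasurable h ν :=
    (aemeasurable_complFn_comp hM measurable_fst hae hΨ'm).ennreal_ofReal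
  set f : ℕ → E3 × ℝ → ENNReal := fun i q => ENNReal.ofReal |mdot (ξ i q) (Ψ' q)| with hf
  have hfm : ∀ i, Measurable (f i) := fun i =>
    ((measurable_mdot_comp (hξm i) hΨ'm).abs).ennreal_ofReal
  have hFY : ∀ i, ∀ᵐ q ∂ν, f i q ≤ g i q + h q := by
    intro i
    filter_upwards [hae] with q hq
    rw [show g i q + h q = ENNReal.ofReal (M q.1 (ξ i q) + complFn M q.1 (Ψ' q)) from
      (ENNReal.ofReal_add (hM.nonneg _ _) (complFn_nonneg hM hq _)).symm]
    exact ENNReal.ofReal_le_ofReal (fenchel_young hM hq (hξs i q) (Ψ' q))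
  apply tendsto_of_subseq_tendsto
  intro ns hns
  have hAns : Tendsto (fun j => ∫⁻ q, g (ns j) q ∂ν) atTop (nhds 0) := hA.comp hns
  have hP : ∀ k : ℕ, ∀ᶠ j in atTop, ∫⁻ q, g (ns j) q ∂ν < (2⁻¹ : ENNReal) ^ k :=
    fun k => hAns.eventually (Iio_mem_nhds (half_pow_pos k))
  obtain ⟨φ, hφmono, hφ⟩ := Filter.extraction_forall_of_eventually hP
  refine ⟨φ, ?_⟩
  set σ : ℕ → ℕ := fun k => ns (φ k) with hσ
  have htsum : ∑' k, ∫⁻ q, g (σ k) q ∂ν ≠ ⊤ :=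
    ne_top_of_le_ne_top tsum_half_pow_ne_top (ENNReal.tsum_le_tsum fun k => (hφ k).le)
  have htsum2 : ∫⁻ q, ∑' k, g (σ k) q ∂ν ≠ ⊤ := by
    rw [lintegral_tsum fun k => (hgm (σ k)).aemeasurable]; exact htsum
  have haesum : ∀ᵐ q ∂ν, ∑' k, g (σ k) q ≠ ⊤ :=
    (ae_lt_top' (AEMeasurable.ennreal_tsum fun k => (hgm (σ k)).aemeasurable) htsum2).mono
      fun q hlt => hlt.ne
  have haef : ∀ᵐ q ∂ν, Tendsto (fun k => f (σ k) q) atTop (nhds 0) := by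
    filter_upwards [hae, haesum] with q hq hsumq
    have hgq : Tendsto (fun k => g (σ k) q) atTop (nhds 0) :=
      ENNReal.tendsto_atTop_zero_of_tsum_ne_top hsumq
    have hMq : Tendsto (fun k => M q.1 (ξ (σ k) q)) atTop (nhds 0) := by
      have h2 := (ENNReal.tendsto_toReal ENNReal.zero_ne_top).comp hgq
      have h1 : (fun k => (g (σ k) q).toReal) = fun k => M q.1 (ξ (σ k) q) :=
        funext fun k => ENNReal.toReal_ofReal (hM.nonneg _ _)
      rw [show ((ENNReal.toReal ∘ fun k => g (σ k) q) = fun k => (g (σ k) q).toReal) from rfl,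
        h1] at h2
      simpa using h2
    have hξq : Tendsto (fun k => ξ (σ k) q) atTop (nhds 0) :=
      tendsto_zero_of_M_tendsto hM hq (fun k => hξs _ _) hMq
    have hmn : Tendsto (fun k => mnorm (ξ (σ k) q)) atTop (nhds 0) := by
      have h3 := (continuous_mnorm.tendsto 0).comp hξq
      rw [show (mnorm ∘ fun k => ξ (σ k) q) = fun k => mnorm (ξ (σ k) q) from rfl,
        mnorm_zero] at h3
      exact h3
    have hreal : Tendsto (fun k => mdot (ξ (σ k) q) (Ψ' q)) atTop (nhds 0) := by
      apply squeeze_zero_norm (fun k => mdot_abs_le _ _)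
      have h4 := hmn.mul_const (mnorm (Ψ' q))
      rwa [zero_mul] at h4
    have h5 := ENNReal.tendsto_ofReal hreal.abs
    rw [abs_zero, ENNReal.ofReal_zero] at h5
    exact h5
  have hminten : Tendsto (fun k => ∫⁻ q, min (f (σ k) q) (h q) ∂ν) atTop (nhds 0) := by
    have := tendsto_lintegral_of_dominated_convergence' (μ := ν)
      (F := fun k q => min (f (σ k) q) (h q)) (f := fun _ => (0:ENNReal)) h
      (fun k => ((hfm (σ k)).aemeasurable).min hhm)
      (fun k => Eventually.of_forall fun q => min_le_right _ _) hfin ?_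
    · rwa [lintegral_zero] at this
    · filter_upwards [haef] with q hq
      exact tendsto_of_tendsto_of_tendsto_of_le_of_le tendsto_const_nhds hq
        (fun k => zero_le) (fun k => min_le_left _ _)
  have hgten : Tendsto (fun k => ∫⁻ q, g (σ k) q ∂ν) atTop (nhds 0) :=
    tendsto_of_tendsto_of_tendsto_of_le_of_le tendsto_const_nhds half_pow_tendsto
      (fun k => zero_le) (fun k => (hφ k).le)
  have hle : ∀ k, ∫⁻ q, f (σ k) q ∂ν
      ≤ (∫⁻ q, g (σ k) q ∂ν) + ∫⁻ q, min (f (σ k) q) (h q) ∂ν := by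
    intro k
    rw [← lintegral_add_left (hgm (σ k))]
    apply lintegral_mono_ae
    filter_upwards [hFY (σ k)] with q hq
    exact enn_le_add_min hq
  have hsum0 := hgten.add hminten
  rw [add_zero] at hsum0
  exact tendsto_of_tendsto_of_tendsto_of_le_of_le tendsto_const_nhds hsum0
    (fun k => zero_le) hle

lemma term3_tendsto {η : ℕ → E3 × ℝ → Mat3} (hηm : ∀ i, Measurable (η i))
    (hηs : ∀ i q, η i q ∈ Sym3)
    {Φ' : E3 × ℝ → Mat3} (hΦ'm : Measurable Φ') (hΦ's : ∀ q, Φ' q ∈ Sym3)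
    (hfin : ∫⁻ q, ENNReal.ofReal (M q.1 (Φ' q)) ∂ν ≠ ⊤)
    (hB : Tendsto (fun i => ∫⁻ q, ENNReal.ofReal (complFn M q.1 (η i q)) ∂ν) atTop (nhds 0)) :
    Tendsto (fun i => ∫⁻ q, ENNReal.ofReal |mdot (Φ' q) (η i q)| ∂ν) atTop (nhds 0) := by
  classical
  set g : ℕ → E3 × ℝ → ENNReal := fun i q => ENNReal.ofReal (complFn M q.1 (η i q)) with hg
  have hgm : ∀ i, AEMeasurable (g i) ν := fun i =>
    (aemeasurable_complFn_comp hM measurable_fst hae (hηm i)).ennreal_ofReal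
  set h : E3 × ℝ → ENNReal := fun q => ENNReal.ofReal (M q.1 (Φ' q)) with hh
  have hhm : Measurable h := (measurable_M_comp hM measurable_fst hΦ'm hΦ's).ennreal_ofReal
  set f : ℕ → E3 × ℝ → ENNReal := fun i q => ENNReal.ofReal |mdot (Φ' q) (η i q)| with hf
  have hfm : ∀ i, Measurable (f i) := fun i =>
    ((measurable_mdot_comp hΦ'm (hηm i)).abs).ennreal_ofReal
  have hFY : ∀ i, ∀ᵐ q ∂ν, f i q ≤ g i q + h q := by
    intro i
    filter_upwards [hae] with q hq
    rw [show g i q + h q = ENNReal.ofReal (complFn M q.1 (η i q) + M q.1 (Φ' q)) from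
      (ENNReal.ofReal_add (complFn_nonneg hM hq _) (hM.nonneg _ _)).symm]
    apply ENNReal.ofReal_le_ofReal
    have := fenchel_young hM hq (hΦ's q) (η i q)
    linarith
  apply tendsto_of_subseq_tendsto
  intro ns hns
  have hBns : Tendsto (fun j => ∫⁻ q, g (ns j) q ∂ν) atTop (nhds 0) := hB.comp hns
  have hP : ∀ k : ℕ, ∀ᶠ j in atTop, ∫⁻ q, g (ns j) q ∂ν < (2⁻¹ : ENNReal) ^ k :=
    fun k => hBns.eventually (Iio_mem_nhds (half_pow_pos k))
  obtain ⟨φ, hφmono, hφ⟩ := Filter.extraction_forall_of_eventually hP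
  refine ⟨φ, ?_⟩
  set σ : ℕ → ℕ := fun k => ns (φ k) with hσ
  have htsum : ∑' k, ∫⁻ q, g (σ k) q ∂ν ≠ ⊤ :=
    ne_top_of_le_ne_top tsum_half_pow_ne_top (ENNReal.tsum_le_tsum fun k => (hφ k).le)
  have htsum2 : ∫⁻ q, ∑' k, g (σ k) q ∂ν ≠ ⊤ := by
    rw [lintegral_tsum fun k => hgm (σ k)]; exact htsum
  have haesum : ∀ᵐ q ∂ν, ∑' k, g (σ k) q ≠ ⊤ :=
    (ae_lt_top' (AEMeasurable.ennreal_tsum fun k => hgm (σ k)) htsum2).mono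
      fun q hlt => hlt.ne
  have haef : ∀ᵐ q ∂ν, Tendsto (fun k => f (σ k) q) atTop (nhds 0) := by
    filter_upwards [hae, haesum] with q hq hsumq
    have hgq : Tendsto (fun k => g (σ k) q) atTop (nhds 0) :=
      ENNReal.tendsto_atTop_zero_of_tsum_ne_top hsumq
    have hMq : Tendsto (fun k => complFn M q.1 (η (σ k) q)) atTop (nhds 0) := by
      have h2 := (ENNReal.tendsto_toReal ENNReal.zero_ne_top).comp hgq
      have h1 : (fun k => (g (σ k) q).toReal) = fun k => complFn M q.1 (η (σ k) q) :=
        funext fun k => ENNReal.toReal_ofReal (complFn_nonneg hM hq _)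
      rw [show ((ENNReal.toReal ∘ fun k => g (σ k) q) = fun k => (g (σ k) q).toReal) from rfl,
        h1] at h2
      simpa using h2
    have hηq : Tendsto (fun k => η (σ k) q) atTop (nhds 0) :=
      tendsto_zero_of_complFn_tendsto hM hq (fun k => hηs _ _) hMq
    have hmn : Tendsto (fun k => mnorm (η (σ k) q)) atTop (nhds 0) := by
      have h3 := (continuous_mnorm.tendsto 0).comp hηq
      rw [show (mnorm ∘ fun k => η (σ k) q) = fun k => mnorm (η (σ k) q) from rfl,
        mnorm_zero] at h3
      exact h3
    have hreal : Tendsto (fun k => mdot (Φ' q) (η (σ k) q)) atTop (nhds 0) := by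
      apply squeeze_zero_norm (fun k => (mdot_abs_le _ _))
      have h4 := hmn.const_mul (mnorm (Φ' q))
      rwa [mul_zero] at h4
    have h5 := ENNReal.tendsto_ofReal hreal.abs
    rw [abs_zero, ENNReal.ofReal_zero] at h5
    exact h5
  have hminten : Tendsto (fun k => ∫⁻ q, min (f (σ k) q) (h q) ∂ν) atTop (nhds 0) := by
    have := tendsto_lintegral_of_dominated_convergence' (μ := ν)
      (F := fun k q => min (f (σ k) q) (h q)) (f := fun _ => (0:ENNReal)) h
      (fun k => ((hfm (σ k)).aemeasurable).min hhm.aemeasurable)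
      (fun k => Eventually.of_forall fun q => min_le_right _ _) hfin ?_
    · rwa [lintegral_zero] at this
    · filter_upwards [haef] with q hq
      exact tendsto_of_tendsto_of_tendsto_of_le_of_le tendsto_const_nhds hq
        (fun k => zero_le) (fun k => min_le_left _ _)
  have hgten : Tendsto (fun k => ∫⁻ q, g (σ k) q ∂ν) atTop (nhds 0) :=
    tendsto_of_tendsto_of_tendsto_of_le_of_le tendsto_const_nhds half_pow_tendsto
      (fun k => zero_le) (fun k => (hφ k).le)
  have hle : ∀ k, ∫⁻ q, f (σ k) q ∂ν
      ≤ (∫⁻ q, g (σ k) q ∂ν) + ∫⁻ q, min (f (σ k) q) (h q) ∂ν := by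
    intro k
    rw [← lintegral_add_left' (hgm (σ k))]
    apply lintegral_mono_ae
    filter_upwards [hFY (σ k)] with q hq
    exact enn_le_add_min hq
  have hsum0 := hgten.add hminten
  rw [add_zero] at hsum0
  exact tendsto_of_tendsto_of_tendsto_of_le_of_le tendsto_const_nhds hsum0
    (fun k => zero_le) hle

end Terms

end AuxLemmas

/-- **Products of modularly convergent sequences converge in `L¹`**: if `Φᵢ` and `Ψᵢ`
have uniformly bounded modulars in `L_M(Q)` and `L_{M*}(Q)` respectively,
`Φᵢ → Φ` modularly in `L_M(Q)` and `Ψᵢ → Ψ` modularly in `L_{M*}(Q)`, then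
`Φᵢ:Ψᵢ → Φ:Ψ` strongly in `L¹(Q)`. -/
theorem product_strong_L1_of_modularConv
    (Ω : Set E3) (hΩo : IsOpen Ω) (hΩb : Bornology.IsBounded Ω)
    (T : ℝ) (hT : 0 < T)
    (M : E3 → Mat3 → ℝ) (hM : IsNFunction Ω M)
    (Φi Ψi : ℕ → E3 × ℝ → Mat3) (Φ Ψ : E3 × ℝ → Mat3)
    (hΦim : ∀ i, Measurable (Φi i)) (hΨim : ∀ i, Measurable (Ψi i))
    (hΦm : Measurable Φ) (hΨm : Measurable Ψ)
    (hΦis : ∀ i q, Φi i q ∈ Sym3) (hΨis : ∀ i q, Ψi i q ∈ Sym3)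
    (hΦs : ∀ q, Φ q ∈ Sym3) (hΨs : ∀ q, Ψ q ∈ Sym3)
    (hΦb : ∃ C : ENNReal, C < ⊤ ∧ ∀ i,
      ∫⁻ q in Ω ×ˢ Ioo (0:ℝ) T, ENNReal.ofReal (M q.1 (Φi i q)) ≤ C)
    (hΨb : ∃ C : ENNReal, C < ⊤ ∧ ∀ i,
      ∫⁻ q in Ω ×ˢ Ioo (0:ℝ) T, ENNReal.ofReal (complFn M q.1 (Ψi i q)) ≤ C)
    (hΦmod : ModularConv Ω T M Φi Φ)
    (hΨmod : ModularConv Ω T (complFn M) Ψi Ψ) :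
    Tendsto (fun i => ∫⁻ q in Ω ×ˢ Ioo (0:ℝ) T,
      ENNReal.ofReal |mdot (Φi i q) (Ψi i q) - mdot (Φ q) (Ψ q)|) atTop (nhds 0) := by
  classical
  obtain ⟨l, hl, hA⟩ := hΦmod
  obtain ⟨m, hm, hB⟩ := hΨmod
  obtain ⟨C₁, hC₁top, hC₁⟩ := hΦb
  obtain ⟨C₂, hC₂top, hC₂⟩ := hΨb
  set D : Set (E3 × ℝ) := Ω ×ˢ Ioo (0:ℝ) T with hD
  have hDmeas : MeasurableSet D := hΩo.measurableSet.prod measurableSet_Ioo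
  have hae : ∀ᵐ q ∂(volume.restrict D), q.1 ∈ Ω := by
    filter_upwards [ae_restrict_mem hDmeas] with q hq
    exact hq.1
  set ξ : ℕ → E3 × ℝ → Mat3 := fun i q => l⁻¹ • (Φi i q - Φ q) with hξdef
  set η : ℕ → E3 × ℝ → Mat3 := fun i q => m⁻¹ • (Ψi i q - Ψ q) with hηdef
  have hξm : ∀ i, Measurable (ξ i) := fun i =>
    measurable_msmul _ (measurable_msub (hΦim i) hΦm)
  have hηm : ∀ i, Measurable (η i) := fun i =>
    measurable_msmul _ (measurable_msub (hΨim i) hΨm)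
  have hξs : ∀ i q, ξ i q ∈ Sym3 := fun i q =>
    sym3_smul _ (sym3_sub (hΦis i q) (hΦs q))
  have hηs : ∀ i q, η i q ∈ Sym3 := fun i q =>
    sym3_smul _ (sym3_sub (hΨis i q) (hΨs q))
  have hA' : Tendsto (fun i => ∫⁻ q in D, ENNReal.ofReal (M q.1 (ξ i q))) atTop (nhds 0) := hA
  have hB' : Tendsto (fun i => ∫⁻ q in D, ENNReal.ofReal (complFn M q.1 (η i q)))
      atTop (nhds 0) := hB
  have hΦeq : ∀ i q, Φi i q = Φ q + l • ξ i q := by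
    intro i q
    show Φi i q = Φ q + l • (l⁻¹ • (Φi i q - Φ q))
    rw [smul_inv_smul₀ (ne_of_gt hl)]
    abel
  have hΨeq : ∀ i q, Ψi i q = Ψ q + m • η i q := by
    intro i q
    show Ψi i q = Ψ q + m • (m⁻¹ • (Ψi i q - Ψ q))
    rw [smul_inv_smul₀ (ne_of_gt hm)]
    abel
  -- the fixed functions Φ' and Ψ'
  have hl1 : (0:ℝ) < 1 + l := by linarith
  have hm1 : (0:ℝ) < 1 + m := by linarith
  set Φ' : E3 × ℝ → Mat3 := fun q => (1+l)⁻¹ • Φ q with hΦ'def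
  set Ψ' : E3 × ℝ → Mat3 := fun q => (1+m)⁻¹ • Ψ q with hΨ'def
  have hΦ'm : Measurable Φ' := measurable_msmul _ hΦm
  have hΨ'm : Measurable Ψ' := measurable_msmul _ hΨm
  have hΦ's : ∀ q, Φ' q ∈ Sym3 := fun q => sym3_smul _ (hΦs q)
  have hΦ'eq : ∀ q, Φ q = (1+l) • Φ' q := fun q =>
    (smul_inv_smul₀ (ne_of_gt hl1) _).symm
  have hΨ'eq : ∀ q, Ψ q = (1+m) • Ψ' q := fun q =>
    (smul_inv_smul₀ (ne_of_gt hm1) _).symm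
  -- finiteness of the modular of Ψ'
  obtain ⟨i₀, hi₀⟩ := (hB'.eventually (Iio_mem_nhds (zero_lt_one (α := ENNReal)))).exists
  have hfinΨ : ∫⁻ q in D, ENNReal.ofReal (complFn M q.1 (Ψ' q)) ≠ ⊤ := by
    have ha : (0:ℝ) ≤ (1+m)⁻¹ := by positivity
    have hb : (0:ℝ) ≤ m * (1+m)⁻¹ := by positivity
    have hpt : ∀ᵐ q ∂(volume.restrict D), ENNReal.ofReal (complFn M q.1 (Ψ' q))
        ≤ ENNReal.ofReal (1+m)⁻¹ * ENNReal.ofReal (complFn M q.1 (Ψi i₀ q))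
          + ENNReal.ofReal (m * (1+m)⁻¹) * ENNReal.ofReal (complFn M q.1 (η i₀ q)) := by
      filter_upwards [hae] with q hq
      have hsum : (1+m)⁻¹ + m * (1+m)⁻¹ = 1 := by field_simp
      have hcomb := complFn_combo hM hq ha hb hsum (Ψi i₀ q) (-(η i₀ q))
      have harg : (1+m)⁻¹ • Ψi i₀ q + (m * (1+m)⁻¹) • -(η i₀ q) = Ψ' q := by
        show (1+m)⁻¹ • Ψi i₀ q + (m * (1+m)⁻¹) • -(m⁻¹ • (Ψi i₀ q - Ψ q)) = (1+m)⁻¹ • Ψ q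
        rw [smul_neg, smul_smul]
        have hc : m * (1+m)⁻¹ * m⁻¹ = (1+m)⁻¹ := by
          field_simp
        rw [hc, smul_sub]
        abel
      rw [harg, complFn_neg hM hq] at hcomb
      calc ENNReal.ofReal (complFn M q.1 (Ψ' q))
          ≤ ENNReal.ofReal ((1+m)⁻¹ * complFn M q.1 (Ψi i₀ q)
              + m * (1+m)⁻¹ * complFn M q.1 (η i₀ q)) := ENNReal.ofReal_le_ofReal hcomb
        _ = _ := by
            rw [ENNReal.ofReal_add (mul_nonneg ha (complFn_nonneg hM hq _))
              (mul_nonneg hb (complFn_nonneg hM hq _)),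
              ENNReal.ofReal_mul ha, ENNReal.ofReal_mul hb]
    have hint : ∫⁻ q in D, ENNReal.ofReal (complFn M q.1 (Ψ' q))
        ≤ ENNReal.ofReal (1+m)⁻¹ * (∫⁻ q in D, ENNReal.ofReal (complFn M q.1 (Ψi i₀ q)))
          + ENNReal.ofReal (m * (1+m)⁻¹)
            * ∫⁻ q in D, ENNReal.ofReal (complFn M q.1 (η i₀ q)) := by
      refine le_trans (lintegral_mono_ae hpt) ?_
      have hm1' : AEMeasurable
          (fun q => ENNReal.ofReal (complFn M q.1 (Ψi i₀ q))) (volume.restrict D) :=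
        (aemeasurable_complFn_comp hM measurable_fst hae (hΨim i₀)).ennreal_ofReal
      have hm2' : AEMeasurable
          (fun q => ENNReal.ofReal (complFn M q.1 (η i₀ q))) (volume.restrict D) :=
        (aemeasurable_complFn_comp hM measurable_fst hae (hηm i₀)).ennreal_ofReal
      rw [lintegral_add_left' (hm1'.const_mul _), lintegral_const_mul'' _ hm1',
        lintegral_const_mul'' _ hm2']
    refine ne_top_of_le_ne_top ?_ hint
    apply ENNReal.add_ne_top.mpr
    constructor
    · exact ENNReal.mul_ne_top ENNReal.ofReal_ne_top
        (ne_top_of_le_ne_top hC₂top.ne (hC₂ i₀))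
    · exact ENNReal.mul_ne_top ENNReal.ofReal_ne_top (ne_top_of_lt hi₀)
  -- finiteness of the modular of Φ'
  obtain ⟨i₁, hi₁⟩ := (hA'.eventually (Iio_mem_nhds (zero_lt_one (α := ENNReal)))).exists
  have hfinΦ : ∫⁻ q in D, ENNReal.ofReal (M q.1 (Φ' q)) ≠ ⊤ := by
    have ha : (0:ℝ) ≤ (1+l)⁻¹ := by positivity
    have hb : (0:ℝ) ≤ l * (1+l)⁻¹ := by positivity
    have hpt : ∀ᵐ q ∂(volume.restrict D), ENNReal.ofReal (M q.1 (Φ' q))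
        ≤ ENNReal.ofReal (1+l)⁻¹ * ENNReal.ofReal (M q.1 (Φi i₁ q))
          + ENNReal.ofReal (l * (1+l)⁻¹) * ENNReal.ofReal (M q.1 (ξ i₁ q)) := by
      filter_upwards [hae] with q hq
      have hsum : (1+l)⁻¹ + l * (1+l)⁻¹ = 1 := by field_simp
      have hcomb := (hM.convexOn q.1).2 (hΦis i₁ q) (sym3_neg (hξs i₁ q)) ha hb hsum
      have harg : (1+l)⁻¹ • Φi i₁ q + (l * (1+l)⁻¹) • -(ξ i₁ q) = Φ' q := by
        show (1+l)⁻¹ • Φi i₁ q + (l * (1+l)⁻¹) • -(l⁻¹ • (Φi i₁ q - Φ q)) = (1+l)⁻¹ • Φ q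
        rw [smul_neg, smul_smul]
        have hc : l * (1+l)⁻¹ * l⁻¹ = (1+l)⁻¹ := by field_simp
        rw [hc, smul_sub]
        abel
      rw [harg, hM.even q.1 hq _ (hξs i₁ q)] at hcomb
      calc ENNReal.ofReal (M q.1 (Φ' q))
          ≤ ENNReal.ofReal ((1+l)⁻¹ * M q.1 (Φi i₁ q)
              + l * (1+l)⁻¹ * M q.1 (ξ i₁ q)) := by
            apply ENNReal.ofReal_le_ofReal
            simpa [smul_eq_mul] using hcomb
        _ = _ := by
            rw [ENNReal.ofReal_add (mul_nonneg ha (hM.nonneg _ _))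
              (mul_nonneg hb (hM.nonneg _ _)),
              ENNReal.ofReal_mul ha, ENNReal.ofReal_mul hb]
    have hint : ∫⁻ q in D, ENNReal.ofReal (M q.1 (Φ' q))
        ≤ ENNReal.ofReal (1+l)⁻¹ * (∫⁻ q in D, ENNReal.ofReal (M q.1 (Φi i₁ q)))
          + ENNReal.ofReal (l * (1+l)⁻¹) * ∫⁻ q in D, ENNReal.ofReal (M q.1 (ξ i₁ q)) := by
      refine le_trans (lintegral_mono_ae hpt) ?_
      have hm1' : Measurable fun q : E3 × ℝ => ENNReal.ofReal (M q.1 (Φi i₁ q)) :=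
        (measurable_M_comp hM measurable_fst (hΦim i₁) (hΦis i₁)).ennreal_ofReal
      have hm2' : Measurable fun q : E3 × ℝ => ENNReal.ofReal (M q.1 (ξ i₁ q)) :=
        (measurable_M_comp hM measurable_fst (hξm i₁) (hξs i₁)).ennreal_ofReal
      rw [lintegral_add_left ((hm1'.const_mul _)), lintegral_const_mul _ hm1',
        lintegral_const_mul _ hm2']
    refine ne_top_of_le_ne_top ?_ hint
    apply ENNReal.add_ne_top.mpr
    constructor
    · exact ENNReal.mul_ne_top ENNReal.ofReal_ne_top
        (ne_top_of_le_ne_top hC₁top.ne (hC₁ i₁))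
    · exact ENNReal.mul_ne_top ENNReal.ofReal_ne_top (ne_top_of_lt hi₁)
  -- the three terms
  have hT1 : Tendsto (fun i => ∫⁻ q in D, ENNReal.ofReal |mdot (ξ i q) (η i q)|)
      atTop (nhds 0) := by
    have hle : ∀ i, ∫⁻ q in D, ENNReal.ofReal |mdot (ξ i q) (η i q)|
        ≤ (∫⁻ q in D, ENNReal.ofReal (M q.1 (ξ i q)))
          + ∫⁻ q in D, ENNReal.ofReal (complFn M q.1 (η i q)) := by
      intro i
      rw [← lintegral_add_left
        (measurable_M_comp hM measurable_fst (hξm i) (hξs i)).ennreal_ofReal]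
      apply lintegral_mono_ae
      filter_upwards [hae] with q hq
      rw [← ENNReal.ofReal_add (hM.nonneg _ _) (complFn_nonneg hM hq _)]
      exact ENNReal.ofReal_le_ofReal (fenchel_young hM hq (hξs i q) (η i q))
    have hsum := hA'.add hB'
    rw [add_zero] at hsum
    exact tendsto_of_tendsto_of_tendsto_of_le_of_le tendsto_const_nhds hsum
      (fun i => zero_le) hle
  have hT2 : Tendsto (fun i => ∫⁻ q in D, ENNReal.ofReal |mdot (ξ i q) (Ψ q)|)
      atTop (nhds 0) := by
    have hbase := term2_tendsto hM hae hξm hξs hΨ'm hfinΨ hA'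
    have heq : ∀ i, ∫⁻ q in D, ENNReal.ofReal |mdot (ξ i q) (Ψ q)|
        = ENNReal.ofReal (1+m) * ∫⁻ q in D, ENNReal.ofReal |mdot (ξ i q) (Ψ' q)| := by
      intro i
      rw [← lintegral_const_mul _
        ((measurable_mdot_comp (hξm i) hΨ'm).abs).ennreal_ofReal]
      apply lintegral_congr
      intro q
      rw [hΨ'eq q, mdot_smul_right, abs_mul, abs_of_pos hm1, ENNReal.ofReal_mul hm1.le]
    rw [funext heq]
    have := ENNReal.Tendsto.const_mul hbase (Or.inr (ENNReal.ofReal_ne_top (r := 1+m)))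
    rwa [mul_zero] at this
  have hT3 : Tendsto (fun i => ∫⁻ q in D, ENNReal.ofReal |mdot (Φ q) (η i q)|)
      atTop (nhds 0) := by
    have hbase := term3_tendsto hM hae hηm hηs hΦ'm hΦ's hfinΦ hB'
    have heq : ∀ i, ∫⁻ q in D, ENNReal.ofReal |mdot (Φ q) (η i q)|
        = ENNReal.ofReal (1+l) * ∫⁻ q in D, ENNReal.ofReal |mdot (Φ' q) (η i q)| := by
      intro i
      rw [← lintegral_const_mul _
        ((measurable_mdot_comp hΦ'm (hηm i)).abs).ennreal_ofReal]
      apply lintegral_congr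
      intro q
      rw [hΦ'eq q, mdot_smul_left, abs_mul, abs_of_pos hl1, ENNReal.ofReal_mul hl1.le]
    rw [funext heq]
    have := ENNReal.Tendsto.const_mul hbase (Or.inr (ENNReal.ofReal_ne_top (r := 1+l)))
    rwa [mul_zero] at this
  -- decomposition
  have hdec : ∀ i q, |mdot (Φi i q) (Ψi i q) - mdot (Φ q) (Ψ q)|
      ≤ l * m * |mdot (ξ i q) (η i q)| + l * |mdot (ξ i q) (Ψ q)|
        + m * |mdot (Φ q) (η i q)| := by
    intro i q
    have e3 : mdot (Φi i q) (Ψi i q) - mdot (Φ q) (Ψ q)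
        = l * m * mdot (ξ i q) (η i q) + l * mdot (ξ i q) (Ψ q)
          + m * mdot (Φ q) (η i q) := by
      rw [hΦeq i q, hΨeq i q]
      simp only [mdot_add_left, mdot_add_right, mdot_smul_left, mdot_smul_right]
      ring
    rw [e3]
    have h1 := abs_add_three (l * m * mdot (ξ i q) (η i q)) (l * mdot (ξ i q) (Ψ q))
      (m * mdot (Φ q) (η i q))
    have e4 : |l * m * mdot (ξ i q) (η i q)| = l * m * |mdot (ξ i q) (η i q)| := by
      rw [abs_mul, abs_of_pos (mul_pos hl hm)]
    have e5 : |l * mdot (ξ i q) (Ψ q)| = l * |mdot (ξ i q) (Ψ q)| := by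
      rw [abs_mul, abs_of_pos hl]
    have e6 : |m * mdot (Φ q) (η i q)| = m * |mdot (Φ q) (η i q)| := by
      rw [abs_mul, abs_of_pos hm]
    rw [e4, e5, e6] at h1
    exact h1
  have hle : ∀ i, ∫⁻ q in D, ENNReal.ofReal |mdot (Φi i q) (Ψi i q) - mdot (Φ q) (Ψ q)|
      ≤ ENNReal.ofReal (l*m) * (∫⁻ q in D, ENNReal.ofReal |mdot (ξ i q) (η i q)|)
        + ENNReal.ofReal l * (∫⁻ q in D, ENNReal.ofReal |mdot (ξ i q) (Ψ q)|)
        + ENNReal.ofReal m * ∫⁻ q in D, ENNReal.ofReal |mdot (Φ q) (η i q)| := by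
    intro i
    have hu1 : Measurable fun q : E3 × ℝ => ENNReal.ofReal |mdot (ξ i q) (η i q)| :=
      ((measurable_mdot_comp (hξm i) (hηm i)).abs).ennreal_ofReal
    have hu2 : Measurable fun q : E3 × ℝ => ENNReal.ofReal |mdot (ξ i q) (Ψ q)| :=
      ((measurable_mdot_comp (hξm i) hΨm).abs).ennreal_ofReal
    have hu3 : Measurable fun q : E3 × ℝ => ENNReal.ofReal |mdot (Φ q) (η i q)| :=
      ((measurable_mdot_comp hΦm (hηm i)).abs).ennreal_ofReal
    have hpt : ∀ q, ENNReal.ofReal |mdot (Φi i q) (Ψi i q) - mdot (Φ q) (Ψ q)|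
        ≤ ENNReal.ofReal (l*m) * ENNReal.ofReal |mdot (ξ i q) (η i q)|
          + ENNReal.ofReal l * ENNReal.ofReal |mdot (ξ i q) (Ψ q)|
          + ENNReal.ofReal m * ENNReal.ofReal |mdot (Φ q) (η i q)| := by
      intro q
      refine le_trans (ENNReal.ofReal_le_ofReal (hdec i q)) (le_of_eq ?_)
      rw [ENNReal.ofReal_add (by positivity) (by positivity),
        ENNReal.ofReal_add (by positivity) (by positivity),
        ← ENNReal.ofReal_mul (show (0:ℝ) ≤ l * m by positivity),
        ← ENNReal.ofReal_mul hl.le, ← ENNReal.ofReal_mul hm.le]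
    refine le_trans (lintegral_mono hpt) ?_
    rw [lintegral_add_left (f := fun q => _ * _ + _ * _) ((hu1.const_mul _).add (hu2.const_mul _)),
      lintegral_add_left (hu1.const_mul _), lintegral_const_mul _ hu1,
      lintegral_const_mul _ hu2, lintegral_const_mul _ hu3]
  -- conclusion
  have hc1 := ENNReal.Tendsto.const_mul hT1 (Or.inr (ENNReal.ofReal_ne_top (r := l*m)))
  have hc2 := ENNReal.Tendsto.const_mul hT2 (Or.inr (ENNReal.ofReal_ne_top (r := l)))
  have hc3 := ENNReal.Tendsto.const_mul hT3 (Or.inr (ENNReal.ofReal_ne_top (r := m)))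
  rw [mul_zero] at hc1 hc2 hc3
  have hsum := (hc1.add hc2).add hc3
  rw [add_zero, add_zero] at hsum
  exact tendsto_of_tendsto_of_tendsto_of_le_of_le tendsto_const_nhds hsum
    (fun i => zero_le) hle
end
end

section
/- From biting convergence to weak L¹ convergence: let a_n ∈ L¹(Q) and let a₀ ∈ L¹(Q) be nonnegative with a_n ≥ −a₀ a.e. for all n. Suppose a_n converges to a ∈ L¹(Q) in the biting sense, and limsup_{n→∞} ∫_Q a_n dx dt ≤ ∫_Q a dx dt. Then a_n converges weakly to a in L¹(Q), i.e. ∫_Q a_n φ dx dt → ∫_Q a φ dx dt for every φ ∈ L^∞(Q). -/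
open MeasureTheory Filter Set Topology

noncomputable section

/-- A bounded sequence `aₙ` in `L¹(μ)` converges to `b` in the biting sense: there is a
nonincreasing sequence of measurable sets `E k` with `μ (E k) → 0` such that, for each
fixed `k`, `aₙ ⇀ b` weakly in `L¹` on the complement of `E k`. -/
def BitingConvergesTo {α : Type*} [MeasurableSpace α] (μ : Measure α)
    (a : ℕ → α → ℝ) (b : α → ℝ) : Prop :=
  ∃ E : ℕ → Set α, (∀ k, MeasurableSet (E k)) ∧ Antitone E ∧
    Tendsto (fun k => μ (E k)) atTop (nhds 0) ∧
    ∀ k, ∀ φ : α → ℝ, Measurable φ → (∃ C : ℝ, ∀ y, |φ y| ≤ C) →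
      Tendsto (fun n => ∫ y in (E k)ᶜ, a n y * φ y ∂μ) atTop
        (nhds (∫ y in (E k)ᶜ, b y * φ y ∂μ))

/-- **From biting convergence to weak `L¹` convergence**: if `aₙ ∈ L¹(Q)` is bounded in
`L¹`, `aₙ ≥ −a₀` a.e. with `0 ≤ a₀ ∈ L¹(Q)`, `aₙ → a` in the biting sense, and
`limsup ∫_Q aₙ ≤ ∫_Q a`, then `aₙ ⇀ a` weakly in `L¹(Q)`. -/
theorem weakL1_of_biting
    (Ω : Set E3) (hΩo : IsOpen Ω) (hΩb : Bornology.IsBounded Ω)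
    (T : ℝ) (hT : 0 < T)
    (a : ℕ → E3 × ℝ → ℝ) (aLim : E3 × ℝ → ℝ) (a0 : E3 × ℝ → ℝ)
    (hint : ∀ n, Integrable (a n) (volume.restrict (Ω ×ˢ Ioo (0:ℝ) T)))
    (hbdd : ∃ C : ℝ, ∀ n,
      ∫ y, |a n y| ∂(volume.restrict (Ω ×ˢ Ioo (0:ℝ) T)) ≤ C)
    (ha0int : Integrable a0 (volume.restrict (Ω ×ˢ Ioo (0:ℝ) T)))
    (ha0nn : 0 ≤ᵐ[volume.restrict (Ω ×ˢ Ioo (0:ℝ) T)] a0)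
    (hlower : ∀ n, ∀ᵐ y ∂(volume.restrict (Ω ×ˢ Ioo (0:ℝ) T)), -(a0 y) ≤ a n y)
    (haLimint : Integrable aLim (volume.restrict (Ω ×ˢ Ioo (0:ℝ) T)))
    (hbite : BitingConvergesTo (volume.restrict (Ω ×ˢ Ioo (0:ℝ) T)) a aLim)
    (hlimsup : Filter.limsup
        (fun n => ∫ y, a n y ∂(volume.restrict (Ω ×ˢ Ioo (0:ℝ) T))) atTop ≤
      ∫ y, aLim y ∂(volume.restrict (Ω ×ˢ Ioo (0:ℝ) T))) :
    ∀ φ : E3 × ℝ → ℝ, Measurable φ → (∃ C : ℝ, ∀ y, |φ y| ≤ C) →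
      Tendsto (fun n => ∫ y, a n y * φ y ∂(volume.restrict (Ω ×ˢ Ioo (0:ℝ) T)))
        atTop (nhds (∫ y, aLim y * φ y ∂(volume.restrict (Ω ×ˢ Ioo (0:ℝ) T)))) := by
  intro φ hφm hφbdd
  obtain ⟨C, hC⟩ := hφbdd
  set μ := volume.restrict (Ω ×ˢ Ioo (0:ℝ) T) with hμdef
  have hC0 : 0 ≤ C := le_trans (abs_nonneg _) (hC 0)
  obtain ⟨E, hEm, hEanti, hE0, hEw⟩ := hbite
  have hφnorm : ∃ C' : ℝ, ∀ y, ‖φ y‖ ≤ C' := ⟨C, fun y => by simpa [Real.norm_eq_abs] using hC y⟩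
  have hintφ : ∀ n, Integrable (fun y => a n y * φ y) μ := fun n => by
    simpa [mul_comm] using (hint n).bdd_mul hφm.aestronglyMeasurable (ae_of_all _ hφnorm.choose_spec)
  have haLimφ : Integrable (fun y => aLim y * φ y) μ := by
    simpa [mul_comm] using haLimint.bdd_mul hφm.aestronglyMeasurable (ae_of_all _ hφnorm.choose_spec)
  have habs : Integrable (fun y => |aLim y|) μ := haLimint.abs
  have ha0nn' : ∀ᵐ y ∂μ, 0 ≤ a0 y := ha0nn
  have hA : Tendsto (fun k => ∫ y in E k, |aLim y| ∂μ) atTop (nhds 0) :=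
    habs.tendsto_setIntegral_nhds_zero hE0
  have hB : Tendsto (fun k => ∫ y in E k, a0 y ∂μ) atTop (nhds 0) :=
    ha0int.tendsto_setIntegral_nhds_zero hE0
  rw [Metric.tendsto_atTop]
  intro ε hε
  have hsum : Tendsto
      (fun k => C * ((∫ y in E k, |aLim y| ∂μ) + 2 * ∫ y in E k, a0 y ∂μ)) atTop (nhds 0) := by
    have := (hA.add (hB.const_mul 2)).const_mul C
    simpa using this
  obtain ⟨k, hk⟩ := (hsum.eventually_lt_const (show (0:ℝ) < ε/4 by linarith)).exists
  set δ : ℝ := ε / (8 * (C + 1)) with hδdef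
  have hC1 : (0:ℝ) < C + 1 := by linarith
  have hδ0 : 0 < δ := by positivity
  -- bound terms on E k
  have hX0 : 0 ≤ ∫ y in E k, |aLim y| ∂μ := integral_nonneg fun y => abs_nonneg _
  have hY0 : 0 ≤ ∫ y in E k, a0 y ∂μ := integral_nonneg_of_ae (ae_restrict_of_ae ha0nn')
  -- eventual facts in n
  have h1' := Metric.tendsto_atTop.mp (hEw k φ hφm ⟨C, hC⟩) (ε/4) (by linarith)
  have h1 : ∀ᶠ n in atTop,
      dist (∫ y in (E k)ᶜ, a n y * φ y ∂μ) (∫ y in (E k)ᶜ, aLim y * φ y ∂μ) < ε/4 :=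
    eventually_atTop.mpr h1'
  have htend1 : Tendsto (fun n => ∫ y in (E k)ᶜ, a n y ∂μ) atTop
      (nhds (∫ y in (E k)ᶜ, aLim y ∂μ)) := by
    have := hEw k (fun _ => 1) measurable_const ⟨1, fun y => by norm_num⟩
    simpa using this
  have h2 : ∀ᶠ n in atTop,
      (∫ y in (E k)ᶜ, aLim y ∂μ) - δ < ∫ y in (E k)ᶜ, a n y ∂μ :=
    htend1.eventually_const_lt (by linarith)
  have hbound : IsBoundedUnder (· ≤ ·) atTop (fun n => ∫ y, a n y ∂μ) := by
    obtain ⟨C', hC'⟩ := hbdd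
    refine isBoundedUnder_of ⟨C', fun n => ?_⟩
    calc ∫ y, a n y ∂μ ≤ |∫ y, a n y ∂μ| := le_abs_self _
      _ ≤ ∫ y, |a n y| ∂μ := by
          simpa [Real.norm_eq_abs] using norm_integral_le_integral_norm (μ := μ) (a n)
      _ ≤ C' := hC' n
  have h3 : ∀ᶠ n in atTop, (∫ y, a n y ∂μ) < (∫ y, aLim y ∂μ) + δ :=
    eventually_lt_of_limsup_lt (lt_of_le_of_lt hlimsup (by linarith)) hbound
  obtain ⟨N, hN⟩ := eventually_atTop.mp ((h1.and h2).and h3)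
  refine ⟨N, fun n hn => ?_⟩
  obtain ⟨⟨hd, hlow⟩, hup⟩ := hN n hn
  -- splitting
  have hsplit_n := integral_add_compl (hEm k) (hintφ n)
  have hsplit_L := integral_add_compl (hEm k) haLimφ
  have hsplit_an := integral_add_compl (hEm k) (hint n)
  have hsplit_aL := integral_add_compl (hEm k) haLimint
  -- |∫_{E k} aLim φ| ≤ C * ∫_{E k} |aLim|
  have hAL : |∫ y in E k, aLim y * φ y ∂μ| ≤ C * ∫ y in E k, |aLim y| ∂μ := by
    calc |∫ y in E k, aLim y * φ y ∂μ| ≤ ∫ y in E k, |aLim y * φ y| ∂μ := by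
          simpa [Real.norm_eq_abs, abs_mul] using
            norm_integral_le_integral_norm (μ := μ.restrict (E k)) (fun y => aLim y * φ y)
      _ ≤ ∫ y in E k, C * |aLim y| ∂μ := by
          refine integral_mono (haLimφ.abs).restrict ((habs.restrict).const_mul C) fun y => ?_
          rw [abs_mul, mul_comm C]
          exact mul_le_mul_of_nonneg_left (hC y) (abs_nonneg _)
      _ = C * ∫ y in E k, |aLim y| ∂μ := integral_const_mul _ _
  -- |∫_{E k} a n φ| ≤ C * ∫_{E k} |a n|
  have hAn1 : |∫ y in E k, a n y * φ y ∂μ| ≤ C * ∫ y in E k, |a n y| ∂μ := by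
    calc |∫ y in E k, a n y * φ y ∂μ| ≤ ∫ y in E k, |a n y * φ y| ∂μ := by
          simpa [Real.norm_eq_abs, abs_mul] using
            norm_integral_le_integral_norm (μ := μ.restrict (E k)) (fun y => a n y * φ y)
      _ ≤ ∫ y in E k, C * |a n y| ∂μ := by
          refine integral_mono ((hintφ n).abs).restrict (((hint n).abs.restrict).const_mul C)
            fun y => ?_
          rw [abs_mul, mul_comm C]
          exact mul_le_mul_of_nonneg_left (hC y) (abs_nonneg _)
      _ = C * ∫ y in E k, |a n y| ∂μ := integral_const_mul _ _
  -- ∫_{E k} |a n| ≤ ∫_{E k} a n + 2 ∫_{E k} a0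
  have hkey : ∫ y in E k, |a n y| ∂μ ≤ (∫ y in E k, a n y ∂μ) + 2 * ∫ y in E k, a0 y ∂μ := by
    have hae : ∀ᵐ y ∂(μ.restrict (E k)), |a n y| ≤ a n y + 2 * a0 y := by
      filter_upwards [ae_restrict_of_ae (hlower n), ae_restrict_of_ae ha0nn'] with y hy1 hy2
      rw [abs_le']
      constructor <;> linarith
    have hint2 : Integrable (fun y => a n y + 2 * a0 y) (μ.restrict (E k)) :=
      ((hint n).restrict).add ((ha0int.restrict).const_mul 2)
    have := integral_mono_ae ((hint n).abs).restrict hint2 hae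
    rwa [integral_add ((hint n).restrict) ((ha0int.restrict).const_mul 2),
      integral_const_mul] at this
  -- ∫_{E k} a n < ∫_{E k} |aLim| + 2δ
  have hEkn : ∫ y in E k, a n y ∂μ < (∫ y in E k, |aLim y| ∂μ) + 2*δ := by
    have e2 : ∫ y in E k, aLim y ∂μ ≤ ∫ y in E k, |aLim y| ∂μ :=
      integral_mono (haLimint.restrict) (habs.restrict) fun y => le_abs_self _
    linarith
  have h2Cδ : 2 * C * δ < ε/4 := by
    rw [hδdef, show 2*C*(ε/(8*(C+1))) = (2*C*ε)/(8*(C+1)) by ring,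
      div_lt_div_iff₀ (by positivity) (by norm_num)]
    nlinarith
  have hAnfin : |∫ y in E k, a n y * φ y ∂μ| < ε/2 := by
    have : |∫ y in E k, a n y * φ y ∂μ|
        ≤ C * ((∫ y in E k, |aLim y| ∂μ) + 2*δ + 2 * ∫ y in E k, a0 y ∂μ) := by
      refine hAn1.trans (mul_le_mul_of_nonneg_left ?_ hC0)
      linarith
    have heq : C * ((∫ y in E k, |aLim y| ∂μ) + 2*δ + 2 * ∫ y in E k, a0 y ∂μ)
        = C * ((∫ y in E k, |aLim y| ∂μ) + 2 * ∫ y in E k, a0 y ∂μ) + 2*C*δ := by ring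
    linarith [hk]
  have hALfin : |∫ y in E k, aLim y * φ y ∂μ| < ε/4 := by
    have : C * ∫ y in E k, |aLim y| ∂μ
        ≤ C * ((∫ y in E k, |aLim y| ∂μ) + 2 * ∫ y in E k, a0 y ∂μ) := by
      refine mul_le_mul_of_nonneg_left ?_ hC0
      linarith
    linarith
  rw [Real.dist_eq]
  have hdB : |(∫ y in (E k)ᶜ, a n y * φ y ∂μ) - ∫ y in (E k)ᶜ, aLim y * φ y ∂μ| < ε/4 := by
    rwa [Real.dist_eq] at hd
  have habs3 : |(∫ y, a n y * φ y ∂μ) - ∫ y, aLim y * φ y ∂μ|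
      ≤ |∫ y in E k, a n y * φ y ∂μ| + |∫ y in E k, aLim y * φ y ∂μ|
        + |(∫ y in (E k)ᶜ, a n y * φ y ∂μ) - ∫ y in (E k)ᶜ, aLim y * φ y ∂μ| := by
    have := abs_add_le ((∫ y in E k, a n y * φ y ∂μ) - ∫ y in E k, aLim y * φ y ∂μ)
      ((∫ y in (E k)ᶜ, a n y * φ y ∂μ) - ∫ y in (E k)ᶜ, aLim y * φ y ∂μ)
    have habs4 := abs_sub (∫ y in E k, a n y * φ y ∂μ) (∫ y in E k, aLim y * φ y ∂μ)
    calc |(∫ y, a n y * φ y ∂μ) - ∫ y, aLim y * φ y ∂μ|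
        = |((∫ y in E k, a n y * φ y ∂μ) - ∫ y in E k, aLim y * φ y ∂μ)
          + ((∫ y in (E k)ᶜ, a n y * φ y ∂μ) - ∫ y in (E k)ᶜ, aLim y * φ y ∂μ)| := by
          rw [← hsplit_n, ← hsplit_L]; ring_nf
      _ ≤ _ := by
          refine (abs_add_le _ _).trans ?_
          have := abs_sub_abs_le_abs_sub (∫ y in E k, a n y * φ y ∂μ)
            (∫ y in E k, aLim y * φ y ∂μ)
          have h5 := abs_sub (∫ y in E k, a n y * φ y ∂μ) (∫ y in E k, aLim y * φ y ∂μ)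
          linarith [h5]
  linarith
end
end
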